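/- Let m, n ≥ 1 and let G = S_n^m = S_n ⋉ (ℤ/mℤ)^n be the group of m-colored permutations. Let t̃_k = (t_k, b) where t_k = (k,k−1,…,1) ∈ S_n (with t₁ the identity) and b = (1,0,…,0) ∈ (ℤ/mℤ)^n. Then (t̃_n, t̃_{n−1}, …, t̃₁) is a perfect basis of G: t̃_k has order mk, and every g ∈ G is uniquely expressible as t̃_n^{c_n} ⋯ t̃₁^{c₁} with 0 ≤ c_k < mk. -/

import Mathlib

/-- The group `Sₙᵐ = Sₙ ⋉ (ℤ/mℤ)ⁿ` of `m`-colored permutations, with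
`(g,x)(h,y) = (gh, x∘h + y)` where `(x∘h)_i = x_{h(i)}`. -/
def ColoredPerm (n m : ℕ) : Type := Equiv.Perm (Fin n) × (Fin n → ZMod m)

namespace ColoredPerm

variable {n m : ℕ}

instance : Mul (ColoredPerm n m) := ⟨fun a b => (a.1 * b.1, a.2 ∘ ⇑b.1 + b.2)⟩
instance : One (ColoredPerm n m) := ⟨(1, 0)⟩
instance : Inv (ColoredPerm n m) := ⟨fun a => (a.1⁻¹, -(a.2 ∘ ⇑(a.1⁻¹)))⟩

theorem mul_def (a b : ColoredPerm n m) : a * b = (a.1 * b.1, a.2 ∘ ⇑b.1 + b.2) := rfl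
theorem one_def : (1 : ColoredPerm n m) = ((1 : Equiv.Perm (Fin n)), 0) := rfl
theorem inv_def (a : ColoredPerm n m) : a⁻¹ = (a.1⁻¹, -(a.2 ∘ ⇑(a.1⁻¹))) := rfl

instance : Group (ColoredPerm n m) where
  mul_assoc a b c := by
    rw [mul_def, mul_def, mul_def, mul_def]
    refine Prod.ext (mul_assoc _ _ _) ?_
    funext i
    simp [Function.comp, Equiv.Perm.mul_apply, add_assoc]
  one_mul a := by
    rw [mul_def, one_def]
    refine Prod.ext (one_mul _) ?_
    funext i
    simp
  mul_one a := by
    rw [mul_def, one_def]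
    refine Prod.ext (mul_one _) ?_
    funext i
    simp
  inv_mul_cancel a := by
    rw [mul_def, one_def]
    refine Prod.ext (inv_mul_cancel _) ?_
    funext i
    show -(a.2 (a.1⁻¹ (a.1 i))) + a.2 i = 0
    simp

instance [NeZero m] : Fintype (ColoredPerm n m) :=
  inferInstanceAs (Fintype (Equiv.Perm (Fin n) × (Fin n → ZMod m)))

instance : DecidableEq (ColoredPerm n m) :=
  inferInstanceAs (DecidableEq (Equiv.Perm (Fin n) × (Fin n → ZMod m)))

/-- total color -/
def col (g : ColoredPerm n m) : ℕ := ∑ i, (g.2 i).val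

/-- major index of a colored permutation w.r.t. the order
`n > ⋯ > 1 > n̄ > ⋯ > 1̄ > n̿ > ⋯`: the letter at position `i` (value `w(i)` with `x_i`
bars) is larger than the one at position `i+1` iff its color is smaller, or the colors
agree and its value is larger. -/
def cmaj (g : ColoredPerm n m) : ℕ :=
  ∑ i : Fin n, if h : i.1 + 1 < n then
    (if ((g.2 i).val < (g.2 ⟨i.1 + 1, h⟩).val ∨
        ((g.2 i).val = (g.2 ⟨i.1 + 1, h⟩).val ∧ g.1 ⟨i.1 + 1, h⟩ < g.1 i))
      then i.1 + 1 else 0) else 0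

/-- flag major index -/
def fmaj (g : ColoredPerm n m) : ℕ := m * cmaj g + col g

/-- `t̃_{i+1} = (t_{i+1}, (1,0,…,0))` where `t_{i+1} = (i+1, i, …, 1)`. -/
def ttil (i : Fin n) : ColoredPerm n m :=
  ((Fin.cycleRange i)⁻¹, fun j => if (j : ℕ) = 0 then 1 else 0)

end ColoredPerm


namespace Stmt13Aux

open ColoredPerm Equiv Finset

variable {N m : ℕ}

theorem t_apply_high (k j : Fin (N+1)) (hj : k.1 < j.1) : (Fin.cycleRange k)⁻¹ j = j := by
  rw [Equiv.Perm.inv_eq_iff_eq, Fin.cycleRange_of_gt (Fin.lt_def.mpr hj)]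

theorem t_apply_low (k j : Fin (N+1)) (hj : j.1 ≤ k.1) :
    ((Fin.cycleRange k)⁻¹ j).1 = (j.1 + k.1) % (k.1+1) := by
  set y := (Fin.cycleRange k)⁻¹ j with hy
  have hcy : Fin.cycleRange k y = j := Equiv.apply_symm_apply _ _
  have hyk : y.1 ≤ k.1 := by
    by_contra hcon
    rw [Fin.cycleRange_of_gt (Fin.lt_def.mpr (by omega))] at hcy
    have := congrArg Fin.val hcy
    omega
  rcases eq_or_lt_of_le hyk with he | hl
  · have hyk' : y = k := Fin.ext he
    rw [hyk', Fin.cycleRange_self] at hcy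
    have hj0 : j.1 = 0 := by rw [← hcy]; rfl
    rw [he, hj0, Nat.zero_add, Nat.mod_eq_of_lt (Nat.lt_succ_self _)]
  · rw [Fin.cycleRange_of_lt (Fin.lt_def.mpr hl)] at hcy
    have hj1 : j.1 = y.1 + 1 := by
      rw [← hcy, Fin.val_add_one, if_neg]
      intro hlast
      have := congrArg Fin.val hlast
      simp only [Fin.val_last] at this
      omega
    have h2 : j.1 + k.1 = y.1 + (k.1+1) := by omega
    rw [h2, Nat.add_mod_right, Nat.mod_eq_of_lt (by omega)]

theorem t_pow_high (k : Fin (N+1)) (a : ℕ) (j : Fin (N+1)) (hj : k.1 < j.1) :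
    ((Fin.cycleRange k)⁻¹ ^ a) j = j := by
  induction a with
  | zero => rfl
  | succ a ih => rw [pow_succ, Perm.mul_apply, t_apply_high _ _ hj, ih]

theorem t_pow_low (k : Fin (N+1)) (a : ℕ) (j : Fin (N+1)) (hj : j.1 ≤ k.1) :
    (((Fin.cycleRange k)⁻¹ ^ a) j).1 = (j.1 + a * k.1) % (k.1+1) := by
  induction a generalizing j with
  | zero =>
    simp only [pow_zero, Perm.one_apply, Nat.zero_mul, Nat.add_zero]
    rw [Nat.mod_eq_of_lt (by omega)]
  | succ a ih =>
    have hle : ((Fin.cycleRange k)⁻¹ j).1 ≤ k.1 := by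
      rw [t_apply_low _ _ hj]
      exact Nat.lt_succ_iff.mp (Nat.mod_lt _ (Nat.succ_pos _))
    rw [pow_succ, Perm.mul_apply, ih _ hle, t_apply_low _ _ hj]
    have h1 : ((j.1 + k.1) % (k.1+1) + a * k.1) % (k.1+1) = ((j.1 + k.1) + a * k.1) % (k.1+1) :=
      Nat.ModEq.add_right (a * k.1) (Nat.mod_modEq (j.1 + k.1) (k.1+1))
    rw [h1]
    congr 1
    ring

theorem ttil_pow_fst (k : Fin (N+1)) (a : ℕ) :
    ((ttil k : ColoredPerm (N+1) m) ^ a).1 = (Fin.cycleRange k)⁻¹ ^ a := by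
  induction a with
  | zero => rfl
  | succ a ih =>
    rw [pow_succ, pow_succ]
    show (ttil k ^ a).1 * (ttil k).1 = _
    rw [ih]
    rfl

theorem ttil_pow_snd (k : Fin (N+1)) (a : ℕ) (j : Fin (N+1)) :
    ((ttil k : ColoredPerm (N+1) m) ^ a).2 j =
      if j.1 ≤ k.1 then (((a + k.1 - j.1) / (k.1+1) : ℕ) : ZMod m) else 0 := by
  induction a generalizing j with
  | zero =>
    simp only [pow_zero]
    split
    · rw [Nat.zero_add, Nat.div_eq_of_lt (by omega)]
      show (0 : ZMod m) = _
      simp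
    · rfl
  | succ a ih =>
    rw [pow_succ]
    show ((ttil k : ColoredPerm (N+1) m) ^ a).2 ((Fin.cycleRange k)⁻¹ j)
        + (if (j : ℕ) = 0 then 1 else 0) = _
    by_cases hj : j.1 ≤ k.1
    · rw [ih, if_pos hj]
      have hval : ((Fin.cycleRange k)⁻¹ j).1 = (j.1 + k.1) % (k.1+1) := t_apply_low _ _ hj
      have hle : ((Fin.cycleRange k)⁻¹ j).1 ≤ k.1 := by
        rw [hval]; exact Nat.lt_succ_iff.mp (Nat.mod_lt _ (Nat.succ_pos _))
      rw [if_pos hle, hval]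
      rcases Nat.eq_zero_or_pos j.1 with h0 | h1
      · have hx : ((j.1 + k.1) % (k.1+1)) = k.1 := by
          rw [h0, Nat.zero_add, Nat.mod_eq_of_lt (Nat.lt_succ_self _)]
        rw [hx, h0, if_pos rfl]
        have h2 : a + k.1 - k.1 = a := by omega
        have h3 : a + 1 + k.1 - 0 = a + (k.1+1) := by omega
        rw [h2, h3, Nat.add_div_right _ (Nat.succ_pos _)]
        push_cast
        ring
      · have hx : ((j.1 + k.1) % (k.1+1)) = j.1 - 1 := by
          have h2 : j.1 + k.1 = (j.1 - 1) + (k.1 + 1) := by omega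
          rw [h2, Nat.add_mod_right, Nat.mod_eq_of_lt (by omega)]
        rw [hx, if_neg (by omega)]
        have h2 : a + k.1 - (j.1 - 1) = a + 1 + k.1 - j.1 := by omega
        rw [h2, add_zero]
    · rw [t_apply_high _ _ (by omega), ih, if_neg hj, if_neg hj, if_neg (by omega), add_zero]

/-- cancellation used to extract `a mod (k+1)` from the permutation part -/
theorem mod_cancel {k a a' : ℕ} (h : (k + a * k) % (k+1) = (k + a' * k) % (k+1)) :
    a % (k+1) = a' % (k+1) := by
  have h1 : a * k ≡ a' * k [MOD k+1] := Nat.ModEq.add_left_cancel' k h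
  have h2 : Nat.gcd (k+1) k = 1 := by simp
  exact Nat.ModEq.cancel_right_of_coprime h2 h1

theorem ttil_pow_eq_one_iff (hm : 1 ≤ m) (k : Fin (N+1)) (a : ℕ) :
    (ttil k : ColoredPerm (N+1) m) ^ a = 1 ↔ m * (k.1+1) ∣ a := by
  haveI : NeZero m := ⟨by omega⟩
  constructor
  · intro h
    have hfst := congrArg Prod.fst h
    rw [ttil_pow_fst] at hfst
    have hk : (((Fin.cycleRange k)⁻¹ ^ a) k).1 = k.1 := by rw [hfst]; rfl
    rw [t_pow_low _ _ _ le_rfl] at hk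
    have hk' : (k.1 + a * k.1) % (k.1+1) = (k.1 + 0 * k.1) % (k.1+1) := by
      simp only [Nat.zero_mul, Nat.add_zero]
      rw [Nat.mod_eq_of_lt (Nat.lt_succ_self _)]
      exact hk
    have hmod : a % (k.1+1) = 0 := by
      have := mod_cancel hk'
      simpa using this
    obtain ⟨w, hw⟩ := Nat.dvd_of_mod_eq_zero hmod
    have hsnd := congrArg Prod.snd h
    have h0 : ((ttil k : ColoredPerm (N+1) m) ^ a).2 ⟨0, Nat.succ_pos _⟩ = 0 := by
      rw [hsnd]; rfl
    rw [ttil_pow_snd, if_pos (Nat.zero_le _), hw] at h0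
    have h2 : (k.1+1) * w + k.1 - 0 = (k.1+1) * w + k.1 := by omega
    rw [h2, Nat.mul_add_div (Nat.succ_pos _), Nat.div_eq_of_lt (Nat.lt_succ_self _),
      Nat.add_zero] at h0
    obtain ⟨u, hu⟩ := (ZMod.natCast_eq_zero_iff w m).mp h0
    exact ⟨u, by rw [hw, hu]; ring⟩
  · rintro ⟨w, rfl⟩
    apply Prod.ext
    · rw [ttil_pow_fst]
      show _ = (1 : Perm (Fin (N+1)))
      ext j
      rcases le_or_gt j.1 k.1 with hj | hj
      · have := t_pow_low k (m * (k.1+1) * w) j hj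
        have h2 : j.1 + m * (k.1+1) * w * k.1 = j.1 + (k.1+1) * (m * w * k.1) := by ring
        rw [h2, Nat.add_mul_mod_self_left, Nat.mod_eq_of_lt (by omega)] at this
        simpa [Fin.ext_iff] using this
      · rw [t_pow_high _ _ _ hj]
        rfl
    · show _ = (0 : Fin (N+1) → ZMod m)
      funext j
      rw [ttil_pow_snd]
      split
      · rename_i hj
        have h2 : m * (k.1+1) * w + k.1 - j.1 = (k.1+1) * (m * w) + (k.1 - j.1) := by
          have h3 : m * (k.1+1) * w = (k.1+1) * (m*w) := by ring
          omega
        rw [h2, Nat.mul_add_div (Nat.succ_pos _), Nat.div_eq_of_lt (by omega), Nat.add_zero]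
        push_cast
        simp
      · rfl

theorem orderOf_ttil (hm : 1 ≤ m) (k : Fin (N+1)) :
    orderOf (ttil k : ColoredPerm (N+1) m) = m * (k.1+1) := by
  refine Nat.dvd_antisymm
    (orderOf_dvd_of_pow_eq_one ((ttil_pow_eq_one_iff hm k _).mpr dvd_rfl)) ?_
  exact (ttil_pow_eq_one_iff hm k _).mp (pow_orderOf_eq_one _)

end Stmt13Aux

namespace Stmt13Aux

open ColoredPerm Equiv Finset

variable {N m : ℕ}

/-- membership in the "subgroup" of elements fixing positions `≥ kk` with color 0 there -/
def InH (kk : ℕ) (g : ColoredPerm (N+1) m) : Prop :=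
  ∀ j : Fin (N+1), kk ≤ j.1 → g.1 j = j ∧ g.2 j = 0

theorem InH_mono {kk kk' : ℕ} (h : kk ≤ kk') {g : ColoredPerm (N+1) m} (hg : InH kk g) :
    InH kk' g := fun j hj => hg j (le_trans h hj)

theorem InH_one (kk : ℕ) : InH kk (1 : ColoredPerm (N+1) m) := fun _ _ => ⟨rfl, rfl⟩

theorem InH_mul {kk : ℕ} {a b : ColoredPerm (N+1) m} (ha : InH kk a) (hb : InH kk b) :
    InH kk (a * b) := by
  intro j hj
  obtain ⟨hb1, hb2⟩ := hb j hj
  obtain ⟨ha1, ha2⟩ := ha j hj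
  constructor
  · show a.1 (b.1 j) = j
    rw [hb1, ha1]
  · show a.2 (b.1 j) + b.2 j = 0
    rw [hb1, ha2, hb2, add_zero]

theorem InH_ttil_pow {kk : ℕ} (i : Fin (N+1)) (hi : i.1 < kk) (a : ℕ) :
    InH kk ((ttil i : ColoredPerm (N+1) m) ^ a) := by
  intro j hj
  have hij : i.1 < j.1 := lt_of_lt_of_le hi hj
  constructor
  · rw [ttil_pow_fst]
    exact t_pow_high _ _ _ hij
  · rw [ttil_pow_snd, if_neg (by omega)]

/-- partial product `t̃_{k-1}^{c_{k-1}} ⋯ t̃_0^{c_0}` -/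
def pp (c : Fin (N+1) → ℕ) : ℕ → ColoredPerm (N+1) m
  | 0 => 1
  | k+1 => if h : k < N+1 then ttil ⟨k, h⟩ ^ c ⟨k, h⟩ * pp c k else pp c k

theorem InH_pp (c : Fin (N+1) → ℕ) (k : ℕ) : InH k (pp (m := m) c k) := by
  induction k with
  | zero => exact InH_one 0
  | succ k ih =>
    rw [pp]
    split
    · exact InH_mul (InH_ttil_pow _ (Nat.lt_succ_self k) _) (InH_mono (Nat.le_succ k) ih)
    · exact InH_mono (Nat.le_succ k) ih

theorem peel (hm : 1 ≤ m) (k : Fin (N+1)) {a a' : ℕ} (ha : a < m*(k.1+1)) (ha' : a' < m*(k.1+1))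
    {h h' : ColoredPerm (N+1) m} (Hh : InH k.1 h) (Hh' : InH k.1 h')
    (heq : ttil k ^ a * h = ttil k ^ a' * h') : a = a' ∧ h = h' := by
  haveI : NeZero m := ⟨by omega⟩
  have e1 : ((ttil k ^ a * h).1 k).1 = (k.1 + a*k.1) % (k.1+1) := by
    show ((ttil k ^ a).1 (h.1 k)).1 = _
    rw [(Hh k le_rfl).1, ttil_pow_fst]
    exact t_pow_low _ _ _ le_rfl
  have e1' : ((ttil k ^ a' * h').1 k).1 = (k.1 + a'*k.1) % (k.1+1) := by
    show ((ttil k ^ a').1 (h'.1 k)).1 = _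
    rw [(Hh' k le_rfl).1, ttil_pow_fst]
    exact t_pow_low _ _ _ le_rfl
  have hmodeq : a % (k.1+1) = a' % (k.1+1) := mod_cancel (by rw [← e1, ← e1', heq])
  have e2 : (ttil k ^ a * h).2 k = ((a/(k.1+1) : ℕ) : ZMod m) := by
    show (ttil k ^ a).2 (h.1 k) + h.2 k = _
    rw [(Hh k le_rfl).1, (Hh k le_rfl).2, add_zero, ttil_pow_snd, if_pos le_rfl]
    have h3 : a + k.1 - k.1 = a := by omega
    rw [h3]
  have e2' : (ttil k ^ a' * h').2 k = ((a'/(k.1+1) : ℕ) : ZMod m) := by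
    show (ttil k ^ a').2 (h'.1 k) + h'.2 k = _
    rw [(Hh' k le_rfl).1, (Hh' k le_rfl).2, add_zero, ttil_pow_snd, if_pos le_rfl]
    have h3 : a' + k.1 - k.1 = a' := by omega
    rw [h3]
  have hdivc : ((a/(k.1+1) : ℕ) : ZMod m) = ((a'/(k.1+1) : ℕ) : ZMod m) := by
    rw [← e2, ← e2', heq]
  have hlt : a/(k.1+1) < m := (Nat.div_lt_iff_lt_mul (by omega : 0 < k.1+1)).mpr (by omega)
  have hlt' : a'/(k.1+1) < m := (Nat.div_lt_iff_lt_mul (by omega : 0 < k.1+1)).mpr (by omega)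
  have hdiv : a/(k.1+1) = a'/(k.1+1) := by
    have hv := congrArg ZMod.val hdivc
    rwa [ZMod.val_cast_of_lt hlt, ZMod.val_cast_of_lt hlt'] at hv
  have haa : a = a' := by
    have d1 := Nat.div_add_mod a (k.1+1)
    have d2 := Nat.div_add_mod a' (k.1+1)
    rw [hdiv] at d1
    omega
  subst haa
  exact ⟨rfl, mul_left_cancel heq⟩

theorem pp_inj (hm : 1 ≤ m) (c c' : Fin (N+1) → ℕ)
    (hc : ∀ i : Fin (N+1), c i < m*(i.1+1)) (hc' : ∀ i : Fin (N+1), c' i < m*(i.1+1)) :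
    ∀ k, pp (m := m) c k = pp c' k → ∀ i : Fin (N+1), i.1 < k → c i = c' i := by
  intro k
  induction k with
  | zero => intro _ i hi; omega
  | succ k ih =>
    intro hpp i hi
    rw [pp, pp] at hpp
    by_cases hk : k < N+1
    · rw [dif_pos hk, dif_pos hk] at hpp
      obtain ⟨he, hrest⟩ :=
        peel hm ⟨k, hk⟩ (hc ⟨k, hk⟩) (hc' ⟨k, hk⟩) (InH_pp c k) (InH_pp c' k) hpp
      rcases (by omega : i.1 < k ∨ i.1 = k) with hlt | heqi
      · exact ih hrest i hlt
      · have hik : i = ⟨k, hk⟩ := Fin.ext heqi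
        rw [hik]
        exact he
    · rw [dif_neg hk, dif_neg hk] at hpp
      exact ih hpp i (by omega)

theorem ofFn_rev {α : Type*} {n : ℕ} (f : Fin n → α) :
    (List.ofFn fun j => f j.rev) = (List.ofFn f).reverse := by
  apply List.ext_getElem
  · simp
  · intro i h1 h2
    simp only [List.length_ofFn] at h1
    rw [List.getElem_ofFn, List.getElem_reverse, List.getElem_ofFn]
    congr 1
    apply Fin.ext
    simp only [Fin.rev]
    simp only [List.length_ofFn]
    omega

theorem prod_ofFn_aux (c : Fin (N+1) → ℕ) :
    ∀ k (hk : k ≤ N+1),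
      ((List.ofFn fun j : Fin k =>
        (ttil (Fin.castLE hk j) : ColoredPerm (N+1) m) ^ c (Fin.castLE hk j)).reverse).prod
      = pp c k := by
  intro k
  induction k with
  | zero => intro hk; simp [pp]
  | succ k ih =>
    intro hk
    have hk' : k ≤ N+1 := Nat.le_of_succ_le hk
    rw [List.ofFn_succ', List.concat_eq_append, List.reverse_concat, List.prod_cons]
    have hfun : (fun i : Fin k =>
        (ttil (Fin.castLE hk (Fin.castSucc i)) : ColoredPerm (N+1) m)
          ^ c (Fin.castLE hk (Fin.castSucc i)))
        = (fun i : Fin k => (ttil (Fin.castLE hk' i) : ColoredPerm (N+1) m)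
          ^ c (Fin.castLE hk' i)) := rfl
    rw [hfun, ih hk']
    have hklt : k < N + 1 := hk
    show (ttil (⟨k, hklt⟩ : Fin (N+1)) : ColoredPerm (N+1) m) ^ c ⟨k, hklt⟩ * pp c k = pp c (k+1)
    rw [pp, dif_pos hklt]

theorem prod_ofFn (c : Fin (N+1) → ℕ) :
    (List.ofFn fun j : Fin (N+1) => (ttil j.rev : ColoredPerm (N+1) m) ^ c j.rev).prod
      = pp c (N+1) := by
  have h1 := ofFn_rev (fun i : Fin (N+1) => (ttil i : ColoredPerm (N+1) m) ^ c i)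
  rw [h1]
  exact prod_ofFn_aux c (N+1) le_rfl

end Stmt13Aux

open ColoredPerm in
/-- `(t̃_n, …, t̃_1)` is a perfect basis of the colored permutation group
`Sₙᵐ`: each `t̃_k = (t_k, (1,0,…,0))` has order `mk`, and every element is uniquely
`t̃_n^{c_n} ⋯ t̃_1^{c_1}` with `0 ≤ c_k < mk`. -/
theorem stmt13 (n m : ℕ) (hn : 1 ≤ n) (hm : 1 ≤ m) :
    (∀ i : Fin n, orderOf (ttil (m := m) i) = m * (i.1 + 1)) ∧
    (∀ g : ColoredPerm n m, ∃! c : ∀ i : Fin n, Fin (m * (i.1 + 1)),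
      g = (List.ofFn fun j : Fin n => (ttil j.rev) ^ ((c j.rev : ℕ))).prod) := by
  obtain ⟨N, rfl⟩ : ∃ N, n = N + 1 := ⟨n - 1, by omega⟩
  haveI : NeZero m := ⟨by omega⟩
  constructor
  · intro i
    exact Stmt13Aux.orderOf_ttil hm i
  · intro g
    set Φ : (∀ i : Fin (N+1), Fin (m * (i.1+1))) → ColoredPerm (N+1) m :=
      fun c => Stmt13Aux.pp (fun i => (c i : ℕ)) (N+1) with hΦ
    have hinj : Function.Injective Φ := by
      intro c c' h
      funext i
      exact Fin.ext
        (Stmt13Aux.pp_inj hm _ _ (fun i => (c i).2) (fun i => (c' i).2) (N+1) h i i.2)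
    have hcard : Fintype.card (∀ i : Fin (N+1), Fin (m * (i.1+1)))
        = Fintype.card (ColoredPerm (N+1) m) := by
      rw [Fintype.card_pi]
      have hc1 : Fintype.card (ColoredPerm (N+1) m)
          = Fintype.card (Equiv.Perm (Fin (N+1)) × (Fin (N+1) → ZMod m)) := rfl
      rw [hc1, Fintype.card_prod, Fintype.card_perm, Fintype.card_fun, ZMod.card,
        Fintype.card_fin]
      simp only [Fintype.card_fin]
      rw [Fin.prod_univ_eq_prod_range (fun i => m * (i + 1)), Finset.prod_mul_distrib,
        Finset.prod_const, Finset.card_range, Finset.prod_range_add_one_eq_factorial]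
      ring
    have hbij : Function.Bijective Φ :=
      (Fintype.bijective_iff_injective_and_card Φ).mpr ⟨hinj, hcard⟩
    obtain ⟨c, hc⟩ := hbij.surjective g
    refine ⟨c, ?_, ?_⟩
    · exact hc.symm.trans ((Stmt13Aux.prod_ofFn (fun i => ((c i : ℕ)))).symm)
    · intro c' hc'
      apply hinj
      rw [hc]
      exact (Stmt13Aux.prod_ofFn (fun i => ((c' i : ℕ)))).symm.trans hc'.symm
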